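/- Let n ≥ 1 and t ∈ ℝ, and define W_t : ℝ × ℝ^{n−1} → ℝ^{n−1} × ℝ² by W_t(u, v) = (v, ψ_{t−‖v‖²}(u)). Then the derivative DW_t(u, v) is injective if and only if u² + ‖v‖² ≠ t. Consequently, the set of singular points of W_t is exactly the sphere {(u, v) : u² + ‖v‖² = t}: for t < 0 the map W_t is an immersion (and a smooth embedding), for t = 0 it has a single singular point at the origin (the embryo), and for t > 0 the singular set is an (n−1)-dimensional sphere (the wrinkle). -/

import Mathlib

/-- The wrinkle profile curve `ψ_δ(u) = (u³ − 3δu, u⁵/5 − (2/3)δu³ + δ²u)`. -/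
noncomputable def psi (δ u : ℝ) : ℝ × ℝ :=
  (u ^ 3 - 3 * δ * u, u ^ 5 / 5 - 2 / 3 * δ * u ^ 3 + δ ^ 2 * u)

private lemma wr_den_pos {t δ u : ℝ} (hδt : δ ≤ t) (ht : t < 0) :
    16 * t ^ 4 ≤ 16 * δ ^ 4 - 8 / 3 * δ * (u ^ 3 - 3 * δ * u) ^ 2
      + 5 * (u ^ 3 - 3 * δ * u) * (u ^ 5 / 5 - 2 / 3 * δ * u ^ 3 + δ ^ 2 * u) := by
  have hδ0 : δ < 0 := lt_of_le_of_lt hδt ht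
  have hD : 16 * δ ^ 4 - 8 / 3 * δ * (u ^ 3 - 3 * δ * u) ^ 2
      + 5 * (u ^ 3 - 3 * δ * u) * (u ^ 5 / 5 - 2 / 3 * δ * u ^ 3 + δ ^ 2 * u)
      = u ^ 8 + 9 * (-δ) * u ^ 6 + 31 * δ ^ 2 * u ^ 4 + 39 * (-δ) ^ 3 * u ^ 2 + 16 * δ ^ 4 := by
    ring
  have ht2 : t ^ 2 ≤ δ ^ 2 := by nlinarith
  have ht4 : t ^ 4 ≤ δ ^ 4 := by nlinarith [sq_nonneg (δ ^ 2 - t ^ 2), sq_nonneg t, sq_nonneg δ]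
  have e1 : (0:ℝ) ≤ u ^ 8 := by positivity
  have e2 : (0:ℝ) ≤ 9 * (-δ) * u ^ 6 := by
    have h6 : (0:ℝ) ≤ u ^ 6 := by positivity
    nlinarith
  have e3 : (0:ℝ) ≤ 31 * δ ^ 2 * u ^ 4 := by positivity
  have e4 : (0:ℝ) ≤ 39 * (-δ) ^ 3 * u ^ 2 := by
    have : (0:ℝ) ≤ -δ := by linarith
    positivity
  linarith [hD ▸ (by linarith [e1, e2, e3, e4, ht4] :
    16 * t ^ 4 ≤ u ^ 8 + 9 * (-δ) * u ^ 6 + 31 * δ ^ 2 * u ^ 4 + 39 * (-δ) ^ 3 * u ^ 2 + 16 * δ ^ 4)]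

private lemma wr_inv (t s u : ℝ) (hs : 0 ≤ s) (ht : t < 0) :
    (20 * (t - s) ^ 2 * (u ^ 5 / 5 - 2 / 3 * (t - s) * u ^ 3 + (t - s) ^ 2 * u)
      + 4 / 3 * (t - s) ^ 3 * (u ^ 3 - 3 * (t - s) * u) + (u ^ 3 - 3 * (t - s) * u) ^ 3) /
      max (16 * (t - s) ^ 4 - 8 / 3 * (t - s) * (u ^ 3 - 3 * (t - s) * u) ^ 2
        + 5 * (u ^ 3 - 3 * (t - s) * u)
          * (u ^ 5 / 5 - 2 / 3 * (t - s) * u ^ 3 + (t - s) ^ 2 * u)) (16 * t ^ 4) = u := by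
  set δ := t - s with hδ
  have hδt : δ ≤ t := by rw [hδ]; linarith
  have hDt := wr_den_pos (u := u) hδt ht
  have ht4 : (0:ℝ) < 16 * t ^ 4 := by
    have : t ≠ 0 := ne_of_lt ht
    positivity
  rw [max_eq_left hDt]
  have hN : 20 * δ ^ 2 * (u ^ 5 / 5 - 2 / 3 * δ * u ^ 3 + δ ^ 2 * u)
      + 4 / 3 * δ ^ 3 * (u ^ 3 - 3 * δ * u) + (u ^ 3 - 3 * δ * u) ^ 3
      = u * (16 * δ ^ 4 - 8 / 3 * δ * (u ^ 3 - 3 * δ * u) ^ 2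
        + 5 * (u ^ 3 - 3 * δ * u) * (u ^ 5 / 5 - 2 / 3 * δ * u ^ 3 + δ ^ 2 * u)) := by ring
  rw [hN, mul_div_assoc, div_self (lt_of_lt_of_le ht4 hDt).ne', mul_one]

set_option maxHeartbeats 1000000 in
theorem stmt_3 (n : ℕ) (hn : 1 ≤ n) (t : ℝ) :
    let V := EuclideanSpace ℝ (Fin (n - 1))
    let W : ℝ × V → V × (ℝ × ℝ) := fun p => (p.2, psi (t - ‖p.2‖ ^ 2) p.1)
    (∀ (u : ℝ) (v : V),
        Function.Injective ⇑(fderiv ℝ W (u, v)) ↔ u ^ 2 + ‖v‖ ^ 2 ≠ t) ∧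
    {p : ℝ × V | ¬ Function.Injective ⇑(fderiv ℝ W p)}
      = {p : ℝ × V | p.1 ^ 2 + ‖p.2‖ ^ 2 = t} ∧
    (t < 0 → (∀ p : ℝ × V, Function.Injective ⇑(fderiv ℝ W p)) ∧ Topology.IsEmbedding W) ∧
    (t = 0 → {p : ℝ × V | ¬ Function.Injective ⇑(fderiv ℝ W p)} = {((0 : ℝ), (0 : V))}) ∧
    (0 < t → {p : ℝ × V | ¬ Function.Injective ⇑(fderiv ℝ W p)}
      = {p : ℝ × V | p.1 ^ 2 + ‖p.2‖ ^ 2 = t}) := by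
  intro V W
  have hg : ∀ p : ℝ × V, DifferentiableAt ℝ (fun p : ℝ × V => psi (t - ‖p.2‖ ^ 2) p.1) p := by
    intro p
    have hs : DifferentiableAt ℝ (fun p : ℝ × V => ‖p.2‖ ^ 2) p :=
      DifferentiableAt.comp p
        (((contDiff_norm_sq (𝕜 := ℝ) (n := 1)).differentiable one_ne_zero) p.2) differentiableAt_snd
    simp only [psi]
    fun_prop
  have hW : ∀ p : ℝ × V, HasFDerivAt W
      ((ContinuousLinearMap.snd ℝ ℝ V).prod
        (fderiv ℝ (fun p : ℝ × V => psi (t - ‖p.2‖ ^ 2) p.1) p)) p := by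
    intro p
    exact ((ContinuousLinearMap.snd ℝ ℝ V).hasFDerivAt).prodMk (hg p).hasFDerivAt
  have hfd : ∀ p : ℝ × V, fderiv ℝ W p
      = (ContinuousLinearMap.snd ℝ ℝ V).prod
        (fderiv ℝ (fun p : ℝ × V => psi (t - ‖p.2‖ ^ 2) p.1) p) :=
    fun p => (hW p).fderiv
  have hcurve : ∀ (u : ℝ) (v : V), fderiv ℝ W (u, v) (1, 0) =
      ((0 : V), (3 * u ^ 2 - 3 * (t - ‖v‖ ^ 2),
        u ^ 4 - 2 * (t - ‖v‖ ^ 2) * u ^ 2 + (t - ‖v‖ ^ 2) ^ 2)) := by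
    intro u v
    set δ := t - ‖v‖ ^ 2 with hδ
    have hγ : HasDerivAt (fun s : ℝ => ((s, v) : ℝ × V)) ((1 : ℝ), (0 : V)) u :=
      (hasDerivAt_id u).prodMk (hasDerivAt_const u v)
    have hcomp : HasDerivAt (fun s : ℝ => W (s, v)) (fderiv ℝ W (u, v) (1, 0)) u := by
      rw [hfd (u, v)]
      exact (hW (u, v)).comp_hasDerivAt u hγ
    have h1 : HasDerivAt (fun s : ℝ => s ^ 3 - 3 * δ * s) (3 * u ^ 2 - 3 * δ) u := by
      have := (hasDerivAt_pow 3 u).sub ((hasDerivAt_id u).const_mul (3 * δ))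
      refine this.congr_deriv ?_
      push_cast; ring
    have h2 : HasDerivAt (fun s : ℝ => s ^ 5 / 5 - 2 / 3 * δ * s ^ 3 + δ ^ 2 * s)
        (u ^ 4 - 2 * δ * u ^ 2 + δ ^ 2) u := by
      have := (((hasDerivAt_pow 5 u).div_const 5).sub
        ((hasDerivAt_pow 3 u).const_mul (2 / 3 * δ))).add ((hasDerivAt_id u).const_mul (δ ^ 2))
      refine this.congr_deriv ?_
      push_cast; ring
    have hdir : HasDerivAt (fun s : ℝ => W (s, v))
        (((0 : V), (3 * u ^ 2 - 3 * δ, u ^ 4 - 2 * δ * u ^ 2 + δ ^ 2))) u :=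
      (hasDerivAt_const u v).prodMk (h1.prodMk h2)
    exact hcomp.unique hdir
  have hiff : ∀ (u : ℝ) (v : V),
      Function.Injective ⇑(fderiv ℝ W (u, v)) ↔ u ^ 2 + ‖v‖ ^ 2 ≠ t := by
    intro u v
    constructor
    · intro hinj heq
      have h0 : fderiv ℝ W (u, v) (1, 0) = 0 := by
        rw [hcurve u v]
        have h' : t - ‖v‖ ^ 2 = u ^ 2 := by linarith
        rw [h']
        have : (3 * u ^ 2 - 3 * u ^ 2, u ^ 4 - 2 * u ^ 2 * u ^ 2 + (u ^ 2) ^ 2)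
            = ((0 : ℝ), (0 : ℝ)) := by
          refine Prod.ext (by ring) (by ring)
        rw [this]
        rfl
      have : ((1 : ℝ), (0 : V)) = 0 := hinj (by rw [h0, map_zero])
      simpa using congrArg Prod.fst this
    · intro hne
      rw [injective_iff_map_eq_zero]
      intro x hx
      have hx2 : x.2 = 0 := by
        have := congrArg Prod.fst hx
        simpa [hfd (u, v)] using this
      have hx1 : x = x.1 • ((1 : ℝ), (0 : V)) := by
        refine Prod.ext (by simp) (by simp [hx2])
      have h0 : x.1 • fderiv ℝ W (u, v) (1, 0) = 0 := by
        rw [← map_smul, ← hx1, hx]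
      rw [hcurve u v] at h0
      have h22 : x.1 * (u ^ 4 - 2 * (t - ‖v‖ ^ 2) * u ^ 2 + (t - ‖v‖ ^ 2) ^ 2) = 0 := by
        have := congrArg (fun z : V × (ℝ × ℝ) => z.2.2) h0
        simpa using this
      have hq : u ^ 4 - 2 * (t - ‖v‖ ^ 2) * u ^ 2 + (t - ‖v‖ ^ 2) ^ 2
          = (u ^ 2 + ‖v‖ ^ 2 - t) ^ 2 := by ring
      have hne' : (u ^ 2 + ‖v‖ ^ 2 - t) ^ 2 ≠ 0 := by
        intro h
        exact hne (by nlinarith [pow_eq_zero_iff (n := 2) (two_ne_zero) |>.mp h])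
      have hx10 : x.1 = 0 := by
        rcases mul_eq_zero.mp h22 with h | h
        · exact h
        · exact absurd (hq ▸ h) hne'
      rw [hx1, hx10, zero_smul]
  refine ⟨hiff, ?_, ?_, ?_, ?_⟩
  · ext ⟨u, v⟩
    simp only [Set.mem_setOf_eq, hiff u v, not_not]
  · intro ht
    have ht4 : (0 : ℝ) < 16 * t ^ 4 := by
      have : t ≠ 0 := ne_of_lt ht
      positivity
    constructor
    · intro ⟨u, v⟩
      rw [hiff]
      have : (0 : ℝ) ≤ u ^ 2 + ‖v‖ ^ 2 := by positivity
      linarith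
    · set G : V × (ℝ × ℝ) → ℝ × V := fun q =>
        ((20 * (t - ‖q.1‖ ^ 2) ^ 2 * q.2.2 + 4 / 3 * (t - ‖q.1‖ ^ 2) ^ 3 * q.2.1 + q.2.1 ^ 3) /
          max (16 * (t - ‖q.1‖ ^ 2) ^ 4 - 8 / 3 * (t - ‖q.1‖ ^ 2) * q.2.1 ^ 2
            + 5 * q.2.1 * q.2.2) (16 * t ^ 4), q.1) with hG
      have hGW : ∀ p : ℝ × V, G (W p) = p := by
        rintro ⟨u, v⟩
        have hs : (0 : ℝ) ≤ ‖v‖ ^ 2 := by positivity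
        refine Prod.ext ?_ rfl
        exact wr_inv t (‖v‖ ^ 2) u hs ht
      have hGcont : Continuous G := by
        rw [hG]
        have hden : ∀ q : V × (ℝ × ℝ),
            max (16 * (t - ‖q.1‖ ^ 2) ^ 4 - 8 / 3 * (t - ‖q.1‖ ^ 2) * q.2.1 ^ 2
              + 5 * q.2.1 * q.2.2) (16 * t ^ 4) ≠ 0 :=
          fun q => (lt_of_lt_of_le ht4 (le_max_right _ _)).ne'
        exact Continuous.prodMk (Continuous.div (by fun_prop) (by fun_prop) hden) continuous_fst
      have hWcont : Continuous W := by
        simp only [W, psi]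
        fun_prop
      have hid : G ∘ W = id := funext hGW
      exact Topology.IsEmbedding.of_comp hWcont hGcont (hid ▸ Topology.IsEmbedding.id)
  · intro ht
    ext ⟨u, v⟩
    simp only [Set.mem_setOf_eq, hiff u v, not_not, ht, Set.mem_singleton_iff, Prod.mk.injEq]
    constructor
    · intro h
      have hu : u = 0 := by nlinarith [sq_nonneg u, sq_nonneg ‖v‖]
      have hv : ‖v‖ = 0 := by nlinarith [sq_nonneg u, norm_nonneg v]
      exact ⟨hu, norm_eq_zero.mp hv⟩
    · rintro ⟨rfl, rfl⟩
      simp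
  · intro _
    ext ⟨u, v⟩
    simp only [Set.mem_setOf_eq, hiff u v, not_not]
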